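/- Let G be a partially ordered abelian group. Then the map I ↦ I ∩ G⁺ is an order-isomorphism from the set of ideals of G ordered by inclusion onto the set of monoid ideals of the commutative monoid G⁺ ordered by inclusion, with inverse given by J ↦ {x − y : x, y ∈ J}. -/

import Mathlib

/-- An ideal of a partially ordered abelian group: a subgroup which is directed and
convex. -/
def IsPogIdeal {G : Type*} [AddCommGroup G] [PartialOrder G] (I : Set G) : Prop :=
  (0 : G) ∈ I ∧ (∀ x ∈ I, ∀ y ∈ I, x + y ∈ I) ∧ (∀ x ∈ I, -x ∈ I) ∧
    (∀ x ∈ I, ∀ y ∈ I, ∃ z ∈ I, x ≤ z ∧ y ≤ z) ∧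
    (∀ x ∈ I, ∀ z ∈ I, ∀ y : G, x ≤ y → y ≤ z → y ∈ I)

/-- A monoid ideal of the commutative monoid `G⁺`: a nonempty subset `J ⊆ G⁺` such
that for all `x, y ∈ G⁺`, `x + y ∈ J ↔ x ∈ J ∧ y ∈ J`. -/
def IsConeIdeal {G : Type*} [AddCommGroup G] [PartialOrder G] (J : Set G) : Prop :=
  J ⊆ {x : G | 0 ≤ x} ∧ J.Nonempty ∧
    ∀ x y : G, 0 ≤ x → 0 ≤ y → (x + y ∈ J ↔ x ∈ J ∧ y ∈ J)

section Aux
set_option linter.unusedSectionVars false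
variable {G : Type*} [AddCommGroup G] [PartialOrder G]
  [CovariantClass G G (· + ·) (· ≤ ·)]

lemma cone_zero {J : Set G} (hJ : IsConeIdeal J) : (0 : G) ∈ J := by
  obtain ⟨hsub, ⟨a, ha⟩, hiff⟩ := hJ
  have h0a : (0:G) ≤ a := hsub ha
  have := (hiff a 0 h0a le_rfl).mp (by simpa using ha)
  exact this.2

lemma cone_down {J : Set G} (hJ : IsConeIdeal J) {a b : G} (h0 : 0 ≤ a) (hab : a ≤ b)
    (hb : b ∈ J) : a ∈ J := by
  obtain ⟨hsub, _, hiff⟩ := hJ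
  have := (hiff a (b - a) h0 (by simpa using hab)).mp (by simpa using hb)
  exact this.1

lemma fwd_cone {I : Set G} (hI : IsPogIdeal I) : IsConeIdeal (I ∩ {x : G | 0 ≤ x}) := by
  obtain ⟨h0, hadd, hneg, hdir, hconv⟩ := hI
  refine ⟨fun x hx => hx.2, ⟨0, h0, le_rfl⟩, fun x y hx hy => ?_⟩
  constructor
  · rintro ⟨hxy, -⟩
    have hxI : x ∈ I := hconv 0 h0 (x+y) hxy x hx (le_add_of_nonneg_right hy)
    have hyI : y ∈ I := hconv 0 h0 (x+y) hxy y hy (le_add_of_nonneg_left hx)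
    exact ⟨⟨hxI, hx⟩, ⟨hyI, hy⟩⟩
  · rintro ⟨⟨hxI, -⟩, ⟨hyI, -⟩⟩
    exact ⟨hadd x hxI y hyI, add_nonneg hx hy⟩

lemma bwd_pog {J : Set G} (hJ : IsConeIdeal J) :
    IsPogIdeal {a : G | ∃ x ∈ J, ∃ y ∈ J, a = x - y} := by
  have h0J := cone_zero hJ
  have hsub := hJ.1
  have haddJ : ∀ x ∈ J, ∀ y ∈ J, x + y ∈ J := fun x hx y hy =>
    (hJ.2.2 x y (hsub hx) (hsub hy)).mpr ⟨hx, hy⟩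
  refine ⟨⟨0, h0J, 0, h0J, by simp⟩, ?_, ?_, ?_, ?_⟩
  · rintro a ⟨x, hx, y, hy, rfl⟩ b ⟨u, hu, v, hv, rfl⟩
    exact ⟨x + u, haddJ x hx u hu, y + v, haddJ y hy v hv, by abel⟩
  · rintro a ⟨x, hx, y, hy, rfl⟩
    exact ⟨y, hy, x, hx, by abel⟩
  · rintro a ⟨x, hx, y, hy, rfl⟩ b ⟨u, hu, v, hv, rfl⟩
    refine ⟨x + u, ⟨x + u, haddJ x hx u hu, 0, h0J, by abel⟩, ?_, ?_⟩
    · calc x - y ≤ x := by simpa using hsub hy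
        _ ≤ x + u := le_add_of_nonneg_right (hsub hu)
    · calc u - v ≤ u := by simpa using hsub hv
        _ ≤ x + u := le_add_of_nonneg_left (hsub hx)
  · rintro a ⟨x, hx, y, hy, rfl⟩ c ⟨u, hu, v, hv, rfl⟩ w hxw hwc
    have key : w + (v + y) ∈ J := by
      refine cone_down hJ ?_ ?_ (haddJ u hu y hy)
      · calc (0:G) ≤ x + v := add_nonneg (hsub hx) (hsub hv)
          _ = (x - y) + (v + y) := by abel
          _ ≤ w + (v + y) := by exact add_le_add_left hxw _
      · calc w + (v + y) ≤ (u - v) + (v + y) := add_le_add_left hwc _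
          _ = u + y := by abel
    exact ⟨w + (v + y), key, v + y, haddJ v hv y hy, by abel⟩

lemma left_inv_aux {I : Set G} (hI : IsPogIdeal I) :
    {a : G | ∃ x ∈ I ∩ {x : G | 0 ≤ x}, ∃ y ∈ I ∩ {x : G | 0 ≤ x}, a = x - y} = I := by
  obtain ⟨h0, hadd, hneg, hdir, hconv⟩ := hI
  ext a
  constructor
  · rintro ⟨x, ⟨hxI, -⟩, y, ⟨hyI, -⟩, rfl⟩
    exact (sub_eq_add_neg x y) ▸ hadd x hxI (-y) (hneg y hyI)
  · intro ha
    obtain ⟨z, hzI, haz, h0z⟩ := hdir a ha 0 h0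
    have hzaI : z - a ∈ I := (sub_eq_add_neg z a) ▸ hadd z hzI (-a) (hneg a ha)
    exact ⟨z, ⟨hzI, h0z⟩, z - a, ⟨hzaI, by simpa using haz⟩, by abel⟩

lemma right_inv_aux {J : Set G} (hJ : IsConeIdeal J) :
    {a : G | ∃ x ∈ J, ∃ y ∈ J, a = x - y} ∩ {x : G | 0 ≤ x} = J := by
  have h0J := cone_zero hJ
  ext a
  constructor
  · rintro ⟨⟨x, hx, y, hy, rfl⟩, h0⟩
    exact cone_down hJ h0 (by simpa using hJ.1 hy) hx
  · intro ha
    exact ⟨⟨a, ha, 0, h0J, by simp⟩, hJ.1 ha⟩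

end Aux

/-- For a partially ordered abelian group `G`, the map `I ↦ I ∩ G⁺` is an order
isomorphism from the ideals of `G` onto the monoid ideals of `G⁺`, with inverse
`J ↦ {x - y : x, y ∈ J}`. -/
theorem stmt4 (G : Type*) [AddCommGroup G] [PartialOrder G]
    [CovariantClass G G (· + ·) (· ≤ ·)] :
    ∃ e : {I : Set G // IsPogIdeal I} ≃o {J : Set G // IsConeIdeal J},
      (∀ I : {I : Set G // IsPogIdeal I}, (e I : Set G) = I.1 ∩ {x : G | 0 ≤ x}) ∧
      (∀ J : {J : Set G // IsConeIdeal J},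
        (e.symm J : Set G) = {a : G | ∃ x ∈ J.1, ∃ y ∈ J.1, a = x - y}) := by
  refine ⟨{
    toFun := fun I => ⟨I.1 ∩ {x : G | 0 ≤ x}, fwd_cone I.2⟩
    invFun := fun J => ⟨{a : G | ∃ x ∈ J.1, ∃ y ∈ J.1, a = x - y}, bwd_pog J.2⟩
    left_inv := fun I => Subtype.ext (left_inv_aux I.2)
    right_inv := fun J => Subtype.ext (right_inv_aux J.2)
    map_rel_iff' := ?_ }, fun I => rfl, fun J => rfl⟩
  intro I I'
  constructor
  · intro h
    have : ({a : G | ∃ x ∈ I.1 ∩ {x:G|0≤x}, ∃ y ∈ I.1 ∩ {x:G|0≤x}, a = x - y} : Set G) ⊆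
        {a : G | ∃ x ∈ I'.1 ∩ {x:G|0≤x}, ∃ y ∈ I'.1 ∩ {x:G|0≤x}, a = x - y} := by
      rintro a ⟨x, hx, y, hy, rfl⟩
      exact ⟨x, h hx, y, h hy, rfl⟩
    rw [left_inv_aux I.2, left_inv_aux I'.2] at this
    exact this
  · intro h
    exact Set.inter_subset_inter_left _ h
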